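/- Let f^{[α]}, g^{[β]} ∈ I^{[Σ]} with f, g ≠ 0, let a = (m1⊗n1, m2⊗n2) ∈ amb(f^{[α]}, g^{[β]}), and let h^{[γ]} = S-Pol(a). Then LM(h) < LM(a), and sig(γ) ⪯ SIG(a), with sig(γ) = SIG(a) if and only if the ambiguity a is regular, and sig(γ) ≺ SIG(a) if and only if a is singular. -/

import Mathlib

/-!  Signature Gröbner bases in the mixed algebra `R[x₁,…,x_k]⟨y₁,…,y_n⟩`
over a principal ideal domain `R`, following Hofstadler–Verron. -/

open Finsupp

/-- A mixed monomial `v·w`, with `v` a commutative monomial in `x₁,…,x_k`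
(recorded by its exponent vector) and `w` a word in the noncommutative
variables `y₁,…,y_n`. -/
@[ext]
structure MMon (k n : ℕ) where
  c : Fin k →₀ ℕ
  w : FreeMonoid (Fin n)

namespace MMon

instance (k n : ℕ) : One (MMon k n) := ⟨⟨0, 1⟩⟩
noncomputable instance (k n : ℕ) : Mul (MMon k n) := ⟨fun a b => ⟨a.c + b.c, a.w * b.w⟩⟩

@[simp] lemma mul_c {k n : ℕ} (a b : MMon k n) : (a * b).c = a.c + b.c := rfl
@[simp] lemma mul_w {k n : ℕ} (a b : MMon k n) : (a * b).w = a.w * b.w := rfl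
@[simp] lemma one_c {k n : ℕ} : (1 : MMon k n).c = 0 := rfl
@[simp] lemma one_w {k n : ℕ} : (1 : MMon k n).w = 1 := rfl

noncomputable instance (k n : ℕ) : Monoid (MMon k n) where
  mul_assoc a b c := by ext : 1 <;> simp [add_assoc, mul_assoc]
  one_mul a := by ext : 1 <;> simp
  mul_one a := by ext : 1 <;> simp

end MMon

/-- A module monomial `u·a·ε_i·b` of the free bimodule `Σ = (A ⊗_{R[X]} A)^r`. -/
@[ext]
structure ModMon (k n r : ℕ) where
  u : Fin k →₀ ℕ
  a : FreeMonoid (Fin n)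
  i : Fin r
  b : FreeMonoid (Fin n)

instance {k n r : ℕ} [NeZero r] : Inhabited (ModMon k n r) := ⟨⟨0, 1, default, 1⟩⟩

/-- The mixed algebra `A = R[x₁,…,x_k]⟨y₁,…,y_n⟩`, realised as the monoid
algebra of the monoid of mixed monomials. -/
abbrev MixedAlg (R : Type) [CommRing R] (k n : ℕ) : Type := MonoidAlgebra R (MMon k n)

/-- The free `A`-bimodule `Σ = (A ⊗_{R[X]} A)^r`, realised as the free
`R`-module on the module monomials `u·a·ε_i·b`. -/
abbrev SigModule (R : Type) [CommRing R] (k n r : ℕ) : Type := ModMon k n r →₀ R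

section Defs

variable {R : Type} [CommRing R] {k n r : ℕ}

/-- The term `c·m` of `A` (an element of `T(A)` when `c ≠ 0`). -/
noncomputable def trm (m : MMon k n) (c : R) : MixedAlg R k n := MonoidAlgebra.single m c

/-- The word `b ∈ ⟨Y⟩`, viewed as an element of `A`. -/
noncomputable def wrd (b : FreeMonoid (Fin n)) : MixedAlg R k n :=
  MonoidAlgebra.single ⟨0, b⟩ 1

/-- Multiplication `m·σ` of a module monomial by a mixed monomial on the left. -/
noncomputable def mulL (m : MMon k n) (σ : ModMon k n r) : ModMon k n r :=
  ⟨m.c + σ.u, m.w * σ.a, σ.i, σ.b⟩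

/-- Multiplication `σ·m` of a module monomial by a mixed monomial on the right. -/
noncomputable def mulR (σ : ModMon k n r) (m : MMon k n) : ModMon k n r :=
  ⟨σ.u + m.c, σ.a, σ.i, σ.b * m.w⟩

/-- The two-sided multiple `m·σ·b` of a module monomial by a mixed monomial `m`
on the left and a word `b` on the right. -/
noncomputable def mulLR (m : MMon k n) (σ : ModMon k n r) (b : FreeMonoid (Fin n)) : ModMon k n r :=
  ⟨m.c + σ.u, m.w * σ.a, σ.i, σ.b * b⟩

/-- The left action of `A` on the bimodule `Σ`. -/
noncomputable def actL (f : MixedAlg R k n) (α : SigModule R k n r) : SigModule R k n r :=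
  Finsupp.sum f.coeff fun m cm => Finsupp.sum α fun σ cσ => Finsupp.single (mulL m σ) (cm * cσ)

/-- The right action of `A` on the bimodule `Σ`. -/
noncomputable def actR (α : SigModule R k n r) (f : MixedAlg R k n) : SigModule R k n r :=
  Finsupp.sum f.coeff fun m cm => Finsupp.sum α fun σ cσ => Finsupp.single (mulR σ m) (cσ * cm)

/-- The two-sided multiple `t·α·b` of `α ∈ Σ` by the term `t = c·m` on the left
and the word `b` on the right. -/
noncomputable def scaleLR (m : MMon k n) (c : R) (α : SigModule R k n r)
    (b : FreeMonoid (Fin n)) : SigModule R k n r :=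
  Finsupp.sum α fun σ cσ => Finsupp.single (mulLR m σ b) (c * cσ)

/-- The `A`-bimodule homomorphism `Σ → A`, `α ↦ ᾱ`, sending `ε_i` to `f_i`
(where `F i = f_i` are the generators). -/
noncomputable def barMap (F : Fin r → MixedAlg R k n) (α : SigModule R k n r) :
    MixedAlg R k n :=
  Finsupp.sum α fun σ cσ =>
    trm ⟨σ.u, σ.a⟩ cσ * F σ.i * wrd σ.b

/-- The basis vector `ε_i` of `Σ`. -/
noncomputable def epsMod (i : Fin r) : SigModule R k n r :=
  Finsupp.single ⟨0, 1, i, 1⟩ 1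

/-- The labeled module `I^{[Σ]}`: pairs `f^{[α]}` with `ᾱ = f`. -/
def Labeled (F : Fin r → MixedAlg R k n) (p : MixedAlg R k n × SigModule R k n r) : Prop :=
  barMap F p.2 = p.1

/-- A syzygy of `I^{[Σ]}`: an element `α ∈ Σ` with `ᾱ = 0`. -/
def IsSyzygy (F : Fin r → MixedAlg R k n) (γ : SigModule R k n r) : Prop :=
  barMap F γ = 0

section Orders

variable [LinearOrder (MMon k n)] [LinearOrder (ModMon k n r)]

/-- The leading monomial of `f ∈ A` (with `LM 0 = ⊥`). -/
noncomputable def LMb (f : MixedAlg R k n) : WithBot (MMon k n) := f.coeff.support.max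

/-- The leading monomial of `f ∈ A` (defaulting to `1` for `f = 0`). -/
noncomputable def LMd (f : MixedAlg R k n) : MMon k n := WithBot.unbotD 1 (f.coeff.support.max)

/-- The leading coefficient of `f ∈ A` (`0` for `f = 0`). -/
noncomputable def LC (f : MixedAlg R k n) : R := f.coeff (LMd f)

/-- The leading term of `f ∈ A`, as an element of `A` (`0` for `f = 0`). -/
noncomputable def LTerm (f : MixedAlg R k n) : MixedAlg R k n := trm (LMd f) (LC f)

/-- The signature monomial of `α ∈ Σ` (with `⊥` for `α = 0`): the `⪯`-largest
monomial of the support of `α`. -/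
noncomputable def sigb (α : SigModule R k n r) : WithBot (ModMon k n r) := α.support.max

variable [NeZero r]

/-- The signature monomial of `α ∈ Σ`, defaulting for `α = 0`. -/
noncomputable def sigMd (α : SigModule R k n r) : ModMon k n r :=
  WithBot.unbotD default (α.support.max)

/-- The coefficient of the signature of `α`. -/
noncomputable def sigC (α : SigModule R k n r) : R := α (sigMd α)

/-- The signature `sig(α)` of `α ∈ Σ`, as a term, i.e. a single-term element of
`Σ` (`0` for `α = 0`).  Equality `sig α = sig β` of signatures as *terms* is
`sigT α = sigT β`; the relation `sig α ≃ sig β` is `sigb α = sigb β`; the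
relation `sig α ≺ sig β` is `sigb α < sigb β`. -/
noncomputable def sigT (α : SigModule R k n r) : SigModule R k n r :=
  Finsupp.single (sigMd α) (sigC α)

end Orders

/-- The compatibility requirements on the chosen monomial ordering on `M(A)`
and module ordering on `M(Σ)`: both are compatible with multiplication,
both are well-orderings, and they are compatible with each other. -/
structure IsOrderSetting (k n r : ℕ) [LinearOrder (MMon k n)]
    [LinearOrder (ModMon k n r)] : Prop where
  mon_wf : WellFounded ((· < ·) : MMon k n → MMon k n → Prop)
  mod_wf : WellFounded ((· < ·) : ModMon k n r → ModMon k n r → Prop)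
  mon_mul : ∀ a b m m' : MMon k n, m ≤ m' → a * m * b ≤ a * m' * b
  mod_mul : ∀ (m : MMon k n) (b : FreeMonoid (Fin n)) (σ τ : ModMon k n r),
      σ ≤ τ → mulLR m σ b ≤ mulLR m τ b
  compat₁ : ∀ (u v : Fin k →₀ ℕ) (a b : FreeMonoid (Fin n)) (i : Fin r),
      (⟨u, a⟩ : MMon k n) < ⟨v, b⟩ ↔ (⟨u, a, i, 1⟩ : ModMon k n r) < ⟨v, b, i, 1⟩
  compat₂ : ∀ (u v : Fin k →₀ ℕ) (a b : FreeMonoid (Fin n)) (i : Fin r),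
      (⟨u, a⟩ : MMon k n) < ⟨v, b⟩ ↔ (⟨u, 1, i, a⟩ : ModMon k n r) < ⟨v, 1, i, b⟩

end Defs

/-! ### Ambiguities -/

/-- `WordAmb a b c d p q` says that `(a ⊗ b, c ⊗ d, p, q)` is an ambiguity
(overlap, inclusion or external) of the words `p` and `q`. -/
inductive WordAmb {n : ℕ} :
    FreeMonoid (Fin n) → FreeMonoid (Fin n) → FreeMonoid (Fin n) → FreeMonoid (Fin n) →
    FreeMonoid (Fin n) → FreeMonoid (Fin n) → Prop
  | overlap₁ (a b p q : FreeMonoid (Fin n)) (h : a * p = q * b)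
      (ha : a ≠ 1) (hb : b ≠ 1) (hla : a.length < q.length) (hlb : b.length < p.length) :
      WordAmb a 1 1 b p q
  | overlap₂ (a b p q : FreeMonoid (Fin n)) (h : p * a = b * q)
      (ha : a ≠ 1) (hb : b ≠ 1) (hla : a.length < q.length) (hlb : b.length < p.length) :
      WordAmb 1 a b 1 p q
  | inclusion₁ (a b p q : FreeMonoid (Fin n)) (h : p = a * q * b) :
      WordAmb 1 1 a b p q
  | inclusion₂ (a b p q : FreeMonoid (Fin n)) (h : a * p * b = q) :
      WordAmb a b 1 1 p q
  | external₁ (m p q : FreeMonoid (Fin n)) :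
      WordAmb 1 (m * q) (p * m) 1 p q
  | external₂ (m p q : FreeMonoid (Fin n)) :
      WordAmb (q * m) 1 1 (m * p) p q

section Amb

variable {R : Type} [CommRing R] {k n r : ℕ}
variable [LinearOrder (MMon k n)] [LinearOrder (ModMon k n r)]

/-- `IsAmb f g m₁ n₁ m₂ n₂` says that `(m₁ ⊗ n₁, m₂ ⊗ n₂)` is an ambiguity of the
(nonzero) polynomials `f` and `g`: an ambiguity of the word parts of their
leading monomials, with left cofactors completed by `lcm(u,v)/u` resp.
`lcm(u,v)/v` on the commutative parts. -/
def IsAmb (f g : MixedAlg R k n) (m₁ : MMon k n) (n₁ : FreeMonoid (Fin n))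
    (m₂ : MMon k n) (n₂ : FreeMonoid (Fin n)) : Prop :=
  ∃ a b c d : FreeMonoid (Fin n),
    WordAmb a b c d (LMd f).w (LMd g).w ∧
    m₁ = ⟨((LMd f).c ⊔ (LMd g).c) - (LMd f).c, a⟩ ∧ n₁ = b ∧
    m₂ = ⟨((LMd f).c ⊔ (LMd g).c) - (LMd g).c, c⟩ ∧ n₂ = d

/-- The leading monomial `LM(a) = LM(m₁ f n₁) = LM(m₂ g n₂)` of an ambiguity. -/
noncomputable def ambLM (f : MixedAlg R k n) (m₁ : MMon k n) (n₁ : FreeMonoid (Fin n)) :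
    MMon k n :=
  m₁ * LMd f * ⟨0, n₁⟩

variable [IsDomain R] [GCDMonoid R]

/-- The cofactor `lcmlc(f,g)/LC(f)`. -/
noncomputable def cofL (f g : MixedAlg R k n) : R :=
  Classical.choose (dvd_lcm_left (LC f) (LC g))

/-- The cofactor `lcmlc(f,g)/LC(g)`. -/
noncomputable def cofR (f g : MixedAlg R k n) : R :=
  Classical.choose (dvd_lcm_right (LC f) (LC g))

variable [NeZero r]

/-- The signature `SIG(a) = max(sig(c_f m₁ α n₁), −sig(c_g m₂ β n₂))` (first in
case of tie) of an ambiguity `a = (m₁ ⊗ n₁, m₂ ⊗ n₂)` of `f^{[α]]`, `g^{[β]}`,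
as a term (single-term element) of `Σ`. -/
noncomputable def ambSIG (f g : MixedAlg R k n) (α β : SigModule R k n r)
    (m₁ : MMon k n) (n₁ : FreeMonoid (Fin n)) (m₂ : MMon k n) (n₂ : FreeMonoid (Fin n)) :
    SigModule R k n r :=
  if sigb (scaleLR m₂ (cofR f g) β n₂) ≤ sigb (scaleLR m₁ (cofL f g) α n₁) then
    sigT (scaleLR m₁ (cofL f g) α n₁)
  else
    - sigT (scaleLR m₂ (cofR f g) β n₂)

/-- An ambiguity is regular if `sig(m₁ α n₁) ≄ sig(m₂ β n₂)`. -/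
def RegAmb (α β : SigModule R k n r) (m₁ : MMon k n) (n₁ : FreeMonoid (Fin n))
    (m₂ : MMon k n) (n₂ : FreeMonoid (Fin n)) : Prop :=
  sigb (scaleLR m₁ (1 : R) α n₁) ≠ sigb (scaleLR m₂ (1 : R) β n₂)

/-- An ambiguity is singular if `sig(c_f m₁ α n₁) = sig(c_g m₂ β n₂)`. -/
def SingAmb (f g : MixedAlg R k n) (α β : SigModule R k n r) (m₁ : MMon k n)
    (n₁ : FreeMonoid (Fin n)) (m₂ : MMon k n) (n₂ : FreeMonoid (Fin n)) : Prop :=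
  sigT (scaleLR m₁ (cofL f g) α n₁) = sigT (scaleLR m₂ (cofR f g) β n₂)

/-- The polynomial part of the S-polynomial of an ambiguity. -/
noncomputable def SPolP (f g : MixedAlg R k n) (m₁ : MMon k n) (n₁ : FreeMonoid (Fin n))
    (m₂ : MMon k n) (n₂ : FreeMonoid (Fin n)) : MixedAlg R k n :=
  trm m₁ (cofL f g) * f * wrd n₁ - trm m₂ (cofR f g) * g * wrd n₂

/-- The module part of the S-polynomial of an ambiguity. -/
noncomputable def SPolM (f g : MixedAlg R k n) (α β : SigModule R k n r) (m₁ : MMon k n)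
    (n₁ : FreeMonoid (Fin n)) (m₂ : MMon k n) (n₂ : FreeMonoid (Fin n)) :
    SigModule R k n r :=
  scaleLR m₁ (cofL f g) α n₁ - scaleLR m₂ (cofR f g) β n₂

/-- The polynomial part of the G-polynomial of an ambiguity, w.r.t. Bézout
coefficients `c`, `d`. -/
noncomputable def GPolP (c d : R) (f g : MixedAlg R k n) (m₁ : MMon k n)
    (n₁ : FreeMonoid (Fin n)) (m₂ : MMon k n) (n₂ : FreeMonoid (Fin n)) : MixedAlg R k n :=
  trm m₁ c * f * wrd n₁ + trm m₂ d * g * wrd n₂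

/-- The module part of the G-polynomial of an ambiguity, w.r.t. Bézout
coefficients `c`, `d`. -/
noncomputable def GPolM (c d : R) (α β : SigModule R k n r) (m₁ : MMon k n)
    (n₁ : FreeMonoid (Fin n)) (m₂ : MMon k n) (n₂ : FreeMonoid (Fin n)) :
    SigModule R k n r :=
  scaleLR m₁ c α n₁ + scaleLR m₂ d β n₂

/-- `BezoutFor c d f g`: `c, d` are Bézout coefficients for `LC f`, `LC g`. -/
def BezoutFor (c d : R) (f g : MixedAlg R k n) : Prop :=
  c * LC f + d * LC g = gcd (LC f) (LC g)

end Amb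

/-! ### Reductions, bases, cover -/

section Red

variable {R : Type} [CommRing R] {k n r : ℕ}
variable [LinearOrder (MMon k n)] [LinearOrder (ModMon k n r)]

/-- `f^{[α]}` is (top) sig-reducible by `G`: there are `g^{[β]} ∈ G`, a term
`t = c·m` and a word `b` with `LT(t g b) = LT(f) > LT(f - t g b)` and
`sig(t β b) ⪯ sig(α)`. -/
def SigReducible (G : Set (MixedAlg R k n × SigModule R k n r))
    (f : MixedAlg R k n) (α : SigModule R k n r) : Prop :=
  ∃ g β, (g, β) ∈ G ∧ ∃ (m : MMon k n) (c : R) (b : FreeMonoid (Fin n)), c ≠ 0 ∧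
    LTerm (trm m c * g * wrd b) = LTerm f ∧
    LMb (f - trm m c * g * wrd b) < LMb f ∧
    sigb (scaleLR m c β b) ≤ sigb α

/-- `f^{[α]}` is regular sig-reducible by `G`. -/
def RegSigReducible (G : Set (MixedAlg R k n × SigModule R k n r))
    (f : MixedAlg R k n) (α : SigModule R k n r) : Prop :=
  ∃ g β, (g, β) ∈ G ∧ ∃ (m : MMon k n) (c : R) (b : FreeMonoid (Fin n)), c ≠ 0 ∧
    LTerm (trm m c * g * wrd b) = LTerm f ∧
    LMb (f - trm m c * g * wrd b) < LMb f ∧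
    sigb (scaleLR m c β b) < sigb α

/-- `f^{[α]}` is super reducible by `G`: there are `g^{[β]} ∈ G`, a term `t` and
a word `b` with `sig(α) = sig(t β b)` (as terms) and `LM(f) = LM(t g b)`. -/
def SuperReducible [NeZero r] (G : Set (MixedAlg R k n × SigModule R k n r))
    (f : MixedAlg R k n) (α : SigModule R k n r) : Prop :=
  ∃ g β, (g, β) ∈ G ∧ ∃ (m : MMon k n) (c : R) (b : FreeMonoid (Fin n)), c ≠ 0 ∧
    sigT α = sigT (scaleLR m c β b) ∧
    LMb f = LMb (trm m c * g * wrd b)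

/-- `α ∈ Σ` is (top) reducible by the set `H ⊆ Σ`: `sig(α) = sig(t γ b)` for
some `γ ∈ H`, term `t` and word `b`. -/
def ModReducible [NeZero r] (H : Set (SigModule R k n r)) (α : SigModule R k n r) : Prop :=
  ∃ γ ∈ H, ∃ (m : MMon k n) (c : R) (b : FreeMonoid (Fin n)), c ≠ 0 ∧
    sigT α = sigT (scaleLR m c γ b)

/-- `G` is a (strong) signature Gröbner basis of `I^{[Σ]}`. -/
def IsSigGB (F : Fin r → MixedAlg R k n) (G : Set (MixedAlg R k n × SigModule R k n r)) :
    Prop :=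
  ∀ f α, barMap F α = f → f ≠ 0 → SigReducible G f α

/-- `G` is a signature Gröbner basis of `I^{[Σ]}` up to (module monomial)
signature `σ`. -/
def IsSigGBUpTo (F : Fin r → MixedAlg R k n)
    (G : Set (MixedAlg R k n × SigModule R k n r)) (σ : WithBot (ModMon k n r)) : Prop :=
  ∀ f α, barMap F α = f → f ≠ 0 → sigb α < σ → SigReducible G f α

/-- `H` is a syzygy basis of `I^{[Σ]}`. -/
def IsSyzBasis [NeZero r] (F : Fin r → MixedAlg R k n) (H : Set (SigModule R k n r)) :
    Prop :=
  ∀ γ, IsSyzygy F γ → γ ≠ 0 → ModReducible H γ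

variable [IsDomain R] [GCDMonoid R] [NeZero r]

/-- `G` is complete: the G-polynomials (w.r.t. non-singular Bézout coefficients)
of all ambiguities of `G` are sig-reducible by `G`. -/
def CompleteSet (G : Set (MixedAlg R k n × SigModule R k n r)) : Prop :=
  ∀ g₁ β₁ g₂ β₂, (g₁, β₁) ∈ G → (g₂, β₂) ∈ G →
    ∀ m₁ n₁ m₂ n₂, IsAmb g₁ g₂ m₁ n₁ m₂ n₂ →
      ∀ c d, BezoutFor c d g₁ g₂ →
        sigb (GPolM c d β₁ β₂ m₁ n₁ m₂ n₂) = sigb (ambSIG g₁ g₂ β₁ β₂ m₁ n₁ m₂ n₂) →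
        SigReducible G (GPolP c d g₁ g₂ m₁ n₁ m₂ n₂) (GPolM c d β₁ β₂ m₁ n₁ m₂ n₂)

/-- `MonLcm σ₁ σ₂ τ`: the least common multiple `lcm(σ₁,σ₂)` of the module
monomials `σ₁ = u₁a₁ε_jb₁`, `σ₂ = u₂a₂ε_jb₂` is defined and equals `τ`. -/
def MonLcm (σ₁ σ₂ τ : ModMon k n r) : Prop :=
  σ₁.i = σ₂.i ∧ τ.i = σ₁.i ∧ τ.u = σ₁.u ⊔ σ₂.u ∧
  ((τ.a = σ₁.a ∧ ∃ s, σ₁.a = s * σ₂.a) ∨ (τ.a = σ₂.a ∧ ∃ s, σ₂.a = s * σ₁.a)) ∧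
  ((τ.b = σ₁.b ∧ ∃ s, σ₁.b = σ₂.b * s) ∨ (τ.b = σ₂.b ∧ ∃ s, σ₂.b = σ₁.b * s))

/-- `H` is sig-complete: all sig-Combinations of elements of `H` are reducible
by `H`. -/
def SigCompleteSet (H : Set (SigModule R k n r)) : Prop :=
  ∀ γ₁ ∈ H, ∀ γ₂ ∈ H, ∀ τ, MonLcm (sigMd γ₁) (sigMd γ₂) τ →
    ∀ (m₁ : MMon k n) (b₁ : FreeMonoid (Fin n)) (m₂ : MMon k n) (b₂ : FreeMonoid (Fin n)),
      mulLR m₁ (sigMd γ₁) b₁ = τ → mulLR m₂ (sigMd γ₂) b₂ = τ →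
      ∀ c d : R, c * sigC γ₁ + d * sigC γ₂ = gcd (sigC γ₁) (sigC γ₂) →
        ModReducible H (scaleLR m₁ c γ₁ b₁ + scaleLR m₂ d γ₂ b₂)

/-- The ambiguity `a` (of `g₁^{[β₁]}`, `g₂^{[β₂]}`), with signature `SIG(a)` and
leading monomial `LM(a)`, is covered by `(G, H)`: there are `g^{[β]} ∈ G`,
`γ ∈ H`, terms `t, t'` (possibly `0`) and words `b, b'` with
`SIG(a) = sig(t β b) + sig(t' γ b')` and `LM(t g b) < LM(a)`. -/
def CoveredBy (G : Set (MixedAlg R k n × SigModule R k n r))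
    (H : Set (SigModule R k n r)) (Sig : SigModule R k n r) (Lm : MMon k n) : Prop :=
  ∃ g β, (g, β) ∈ G ∧ ∃ γ ∈ H,
    ∃ (m : MMon k n) (c : R) (b : FreeMonoid (Fin n))
      (m' : MMon k n) (c' : R) (b' : FreeMonoid (Fin n)),
      Sig = sigT (scaleLR m c β b) + sigT (scaleLR m' c' γ b') ∧
      LMb (trm m c * g * wrd b) < (Lm : WithBot (MMon k n))

end Red

/-! ### Auxiliary lemmas -/

section Aux

lemma finset_max_lt_iff {M : Type*} [LinearOrder M] (s : Finset M) (a : M) :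
    s.max < (a : WithBot M) ↔ ∀ x ∈ s, x < a := by
  rw [Finset.max_eq_sup_coe, Finset.sup_lt_iff (WithBot.bot_lt_coe a)]
  simp

lemma finset_max_eq_coe {M : Type*} [LinearOrder M] {s : Finset M} {a : M}
    (hmem : a ∈ s) (hub : ∀ x ∈ s, x ≤ a) : s.max = (a : WithBot M) :=
  le_antisymm (Finset.max_le fun x hx => WithBot.coe_le_coe.2 (hub x hx)) (Finset.le_max hmem)

lemma finset_max_image {M N : Type*} [LinearOrder M] [LinearOrder N] {φ : M → N}
    (hφ : Monotone φ) (s : Finset M) [DecidableEq N] :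
    (s.image φ).max = WithBot.map φ s.max := by
  rcases s.eq_empty_or_nonempty with rfl | hs
  · simp
  · rw [← Finset.coe_max' hs]
    apply finset_max_eq_coe
    · exact Finset.mem_image_of_mem φ (s.max'_mem hs)
    · intro y hy
      obtain ⟨x, hx, rfl⟩ := Finset.mem_image.1 hy
      exact hφ (Finset.le_max' s x hx)

variable {R : Type} [CommRing R] {k n r : ℕ}

lemma mmul_injective (m b : MMon k n) :
    Function.Injective (fun x : MMon k n => m * x * b) := by
  intro x y h
  have hc : m.c + x.c + b.c = m.c + y.c + b.c := congrArg MMon.c h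
  have hw : m.w * x.w * b.w = m.w * y.w * b.w := congrArg MMon.w h
  ext : 1
  · have := add_right_cancel hc
    exact add_left_cancel this
  · have := mul_right_cancel hw
    exact mul_left_cancel this

lemma mulLR_injective (m : MMon k n) (b : FreeMonoid (Fin n)) :
    Function.Injective (fun σ : ModMon k n r => mulLR m σ b) := by
  intro σ τ h
  have h' : mulLR m σ b = mulLR m τ b := h
  rw [mulLR, mulLR, ModMon.mk.injEq] at h'
  obtain ⟨hu, ha2, hi, hb⟩ := h'
  ext : 1
  · exact add_left_cancel hu
  · exact mul_left_cancel ha2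
  · exact hi
  · exact mul_right_cancel hb

lemma trm_mul_wrd_eq (m : MMon k n) (c : R) (b : FreeMonoid (Fin n)) (f : MixedAlg R k n) :
    (trm m c * f * wrd b).coeff
      = c • Finsupp.mapDomain (fun x => m * x * (⟨0, b⟩ : MMon k n)) f.coeff := by
  induction f using MonoidAlgebra.induction_linear with
  | zero => simp [Finsupp.mapDomain_zero]
  | add p q hp hq =>
      rw [mul_add, add_mul, MonoidAlgebra.coeff_add, hp, hq, MonoidAlgebra.coeff_add,
        Finsupp.mapDomain_add, smul_add]
  | single x d =>
      rw [trm, wrd, MonoidAlgebra.single_mul_single, MonoidAlgebra.single_mul_single,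
        MonoidAlgebra.coeff_single, MonoidAlgebra.coeff_single,
        Finsupp.mapDomain_single, Finsupp.smul_single]
      rw [mul_one, smul_eq_mul]

lemma scaleLR_eq (m : MMon k n) (c : R) (α : SigModule R k n r) (b : FreeMonoid (Fin n)) :
    scaleLR m c α b = c • Finsupp.mapDomain (fun σ => mulLR m σ b) α := by
  rw [scaleLR, Finsupp.mapDomain, Finsupp.smul_sum]
  simp only [Finsupp.smul_single, smul_eq_mul]

variable [IsDomain R]

lemma smul_mapDomain_max {M N : Type*} [LinearOrder M] [LinearOrder N] {φ : M → N}
    (hφ : StrictMono φ) {c : R} (hc : c ≠ 0) (v : M →₀ R) :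
    (c • Finsupp.mapDomain φ v).support.max = WithBot.map φ v.support.max := by
  classical
  rw [Finsupp.support_smul_eq hc, Finsupp.mapDomain_support_of_injective hφ.injective,
    finset_max_image hφ.monotone]

lemma smul_mapDomain_apply {M N : Type*} {φ : M → N} (hφ : Function.Injective φ)
    (c : R) (v : M →₀ R) (x : M) :
    (c • Finsupp.mapDomain φ v) (φ x) = c * v x := by
  rw [Finsupp.smul_apply, Finsupp.mapDomain_apply hφ, smul_eq_mul]

end Aux

section LeadAux

variable {R : Type} [CommRing R] {k n r : ℕ}
variable [LinearOrder (MMon k n)] [LinearOrder (ModMon k n r)]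

lemma LMb_eq_coe {f : MixedAlg R k n} (hf : f ≠ 0) : LMb f = (LMd f : WithBot (MMon k n)) := by
  have hs : f.coeff.support.Nonempty :=
    Finsupp.support_nonempty_iff.2 (fun h => hf (MonoidAlgebra.coeff_eq_zero.1 h))
  rw [LMb, LMd, ← Finset.coe_max' hs]
  rfl

lemma LMd_mem {f : MixedAlg R k n} (hf : f ≠ 0) : LMd f ∈ f.coeff.support := by
  have hs : f.coeff.support.Nonempty :=
    Finsupp.support_nonempty_iff.2 (fun h => hf (MonoidAlgebra.coeff_eq_zero.1 h))
  have : (LMd f : WithBot (MMon k n)) = ↑(f.coeff.support.max' hs) := by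
    rw [LMd, ← Finset.coe_max' hs]; rfl
  rw [WithBot.coe_inj] at this
  rw [this]; exact f.coeff.support.max'_mem hs

lemma LC_ne_zero {f : MixedAlg R k n} (hf : f ≠ 0) : LC f ≠ 0 :=
  Finsupp.mem_support_iff.1 (LMd_mem hf)

variable [NeZero r]

lemma sigb_eq_coe {α : SigModule R k n r} (hα : α ≠ 0) :
    sigb α = (sigMd α : WithBot (ModMon k n r)) := by
  have hs : α.support.Nonempty := Finsupp.support_nonempty_iff.2 hα
  rw [sigb, sigMd, ← Finset.coe_max' hs]
  rfl

lemma sigMd_mem {α : SigModule R k n r} (hα : α ≠ 0) : sigMd α ∈ α.support := by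
  have hs : α.support.Nonempty := Finsupp.support_nonempty_iff.2 hα
  have : (sigMd α : WithBot (ModMon k n r)) = ↑(α.support.max' hs) := by
    rw [sigMd, ← Finset.coe_max' hs]; rfl
  rw [WithBot.coe_inj] at this
  rw [this]; exact α.support.max'_mem hs

lemma sigC_ne_zero {α : SigModule R k n r} (hα : α ≠ 0) : sigC α ≠ 0 :=
  Finsupp.mem_support_iff.1 (sigMd_mem hα)

lemma sigMd_of_sigb {α : SigModule R k n r} {τ : ModMon k n r}
    (h : sigb α = (τ : WithBot (ModMon k n r))) : sigMd α = τ := by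
  rw [sigMd, ← sigb, h]; rfl

lemma sigT_eq_of_sigb {α : SigModule R k n r} {τ : ModMon k n r}
    (h : sigb α = (τ : WithBot (ModMon k n r))) : sigT α = Finsupp.single τ (α τ) := by
  have h1 : sigMd α = τ := sigMd_of_sigb h
  rw [sigT, sigC, h1]

lemma sigb_single {τ : ModMon k n r} {c : R} (hc : c ≠ 0) :
    sigb (Finsupp.single τ c : SigModule R k n r) = (τ : WithBot (ModMon k n r)) := by
  rw [sigb, Finsupp.support_single_ne_zero _ hc, Finset.max_singleton]

lemma sigT_zero : sigT (0 : SigModule R k n r) = 0 := by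
  rw [sigT, sigC]
  simp

end LeadAux

section MainAux

variable {R : Type} [CommRing R] [IsDomain R] {k n r : ℕ}
variable [LinearOrder (MMon k n)] [LinearOrder (ModMon k n r)]

/-- leading data of `trm m c * f * wrd b`. -/
lemma lead_trm_mul (hord : IsOrderSetting k n r) [NeZero r]
    {f : MixedAlg R k n} (hf : f ≠ 0) (m : MMon k n) {c : R} (hc : c ≠ 0)
    (b : FreeMonoid (Fin n)) :
    LMb (trm m c * f * wrd b) = ((m * LMd f * ⟨0, b⟩ : MMon k n) : WithBot (MMon k n)) ∧
    (trm m c * f * wrd b : MixedAlg R k n).coeff (m * LMd f * (⟨0, b⟩ : MMon k n)) = c * LC f := by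
  have hφm : Monotone (fun x : MMon k n => m * x * (⟨0, b⟩ : MMon k n)) :=
    fun x y hxy => hord.mon_mul m ⟨0, b⟩ x y hxy
  have hφ : StrictMono (fun x : MMon k n => m * x * (⟨0, b⟩ : MMon k n)) :=
    hφm.strictMono_of_injective (mmul_injective m ⟨0, b⟩)
  constructor
  · rw [LMb, trm_mul_wrd_eq, smul_mapDomain_max hφ hc, ← LMb, LMb_eq_coe hf]
    rfl
  · rw [trm_mul_wrd_eq]
    exact smul_mapDomain_apply hφ.injective c f.coeff (LMd f)

variable [NeZero r]

/-- signature data of `scaleLR m c α b`. -/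
lemma sig_scaleLR (hord : IsOrderSetting k n r)
    {α : SigModule R k n r} (hα : α ≠ 0) (m : MMon k n) {c : R} (hc : c ≠ 0)
    (b : FreeMonoid (Fin n)) :
    sigb (scaleLR m c α b) = ((mulLR m (sigMd α) b : ModMon k n r) : WithBot (ModMon k n r)) ∧
    (scaleLR m c α b) (mulLR m (sigMd α) b) = c * sigC α := by
  have hψm : Monotone (fun σ : ModMon k n r => mulLR m σ b) := by
    intro σ τ h
    have := hord.mod_mul m b σ τ h
    simpa [mulLR, mulLR] using this
  have hψ : StrictMono (fun σ : ModMon k n r => mulLR m σ b) :=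
    hψm.strictMono_of_injective (mulLR_injective m b)
  constructor
  · rw [sigb, scaleLR_eq, smul_mapDomain_max hψ hc, ← sigb, sigb_eq_coe hα]
    rfl
  · rw [scaleLR_eq]
    exact smul_mapDomain_apply hψ.injective c α (sigMd α)

variable [GCDMonoid R]

lemma cofL_spec (f g : MixedAlg R k n) :
    lcm (LC f) (LC g) = LC f * cofL f g :=
  Classical.choose_spec (dvd_lcm_left (LC f) (LC g))

lemma cofR_spec (f g : MixedAlg R k n) :
    lcm (LC f) (LC g) = LC g * cofR f g :=
  Classical.choose_spec (dvd_lcm_right (LC f) (LC g))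

lemma cofL_ne_zero {f g : MixedAlg R k n} (hf : f ≠ 0) (hg : g ≠ 0) : cofL f g ≠ 0 := by
  intro h
  have := cofL_spec f g
  rw [h, mul_zero] at this
  rcases (lcm_eq_zero_iff (LC f) (LC g)).1 this with h | h
  · exact LC_ne_zero hf h
  · exact LC_ne_zero hg h

lemma cofR_ne_zero {f g : MixedAlg R k n} (hf : f ≠ 0) (hg : g ≠ 0) : cofR f g ≠ 0 := by
  intro h
  have := cofR_spec f g
  rw [h, mul_zero] at this
  rcases (lcm_eq_zero_iff (LC f) (LC g)).1 this with h | h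
  · exact LC_ne_zero hf h
  · exact LC_ne_zero hg h

lemma barMap_ne_zero {F : Fin r → MixedAlg R k n} {α : SigModule R k n r}
    {f : MixedAlg R k n} (hlab : barMap F α = f) (hf : f ≠ 0) : α ≠ 0 := by
  rintro rfl
  apply hf
  rw [← hlab, barMap, Finsupp.sum_zero_index]

/-- The key combinatorial fact: the two sides of an ambiguity have the same
leading monomial. -/
lemma amb_lm_eq {f g : MixedAlg R k n} {m₁ : MMon k n} {n₁ : FreeMonoid (Fin n)}
    {m₂ : MMon k n} {n₂ : FreeMonoid (Fin n)} (ha : IsAmb f g m₁ n₁ m₂ n₂) :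
    (m₁ * LMd f * ⟨0, n₁⟩ : MMon k n) = m₂ * LMd g * ⟨0, n₂⟩ := by
  obtain ⟨a, b, c, d, hw, h1, h2, h3, h4⟩ := ha
  subst h1; subst h2; subst h3; subst h4
  ext : 1
  · show ((LMd f).c ⊔ (LMd g).c) - (LMd f).c + (LMd f).c + 0
        = ((LMd f).c ⊔ (LMd g).c) - (LMd g).c + (LMd g).c + 0
    rw [add_zero, add_zero, tsub_add_cancel_of_le le_sup_left,
      tsub_add_cancel_of_le le_sup_right]
  · simp only [MMon.mul_w]
    cases hw with
    | overlap₁ a b p q h ha hb hla hlb => rw [mul_one, one_mul]; exact h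
    | overlap₂ a b p q h ha hb hla hlb => rw [one_mul, mul_one]; exact h
    | inclusion₁ a b p q h => rw [one_mul, mul_one]; exact h
    | inclusion₂ a b p q h => rw [one_mul, mul_one]; exact h
    | external₁ m p q => rw [one_mul, mul_one, mul_assoc]
    | external₂ m p q => rw [mul_one, one_mul, mul_assoc]

end MainAux

/-- properties of S-polynomials.  For `h^{[γ]} = S-Pol(a)`:
`LM(h) < LM(a)` and `sig(γ) ⪯ SIG(a)`, with equality (of terms) if and only if
the ambiguity `a` is regular, and `sig(γ) ≺ SIG(a)` if and only if `a` is
singular. -/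
theorem spol_properties
    {R : Type} [CommRing R] [IsDomain R] [IsPrincipalIdealRing R] [GCDMonoid R]
    {k n r : ℕ} [NeZero r]
    [LinearOrder (MMon k n)] [LinearOrder (ModMon k n r)]
    (hord : IsOrderSetting k n r)
    (F : Fin r → MixedAlg R k n)
    (f g : MixedAlg R k n) (α β : SigModule R k n r)
    (hlabf : barMap F α = f) (hlabg : barMap F β = g)
    (hf : f ≠ 0) (hg : g ≠ 0)
    (m₁ : MMon k n) (n₁ : FreeMonoid (Fin n)) (m₂ : MMon k n) (n₂ : FreeMonoid (Fin n))
    (ha : IsAmb f g m₁ n₁ m₂ n₂) :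
    LMb (SPolP f g m₁ n₁ m₂ n₂) < (ambLM f m₁ n₁ : WithBot (MMon k n)) ∧
    sigb (SPolM f g α β m₁ n₁ m₂ n₂) ≤ sigb (ambSIG f g α β m₁ n₁ m₂ n₂) ∧
    (sigT (SPolM f g α β m₁ n₁ m₂ n₂) = ambSIG f g α β m₁ n₁ m₂ n₂
        ↔ RegAmb α β m₁ n₁ m₂ n₂) ∧
    (sigb (SPolM f g α β m₁ n₁ m₂ n₂) < sigb (ambSIG f g α β m₁ n₁ m₂ n₂)
        ↔ SingAmb f g α β m₁ n₁ m₂ n₂) := by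
  classical
  have hα : α ≠ 0 := barMap_ne_zero hlabf hf
  have hβ : β ≠ 0 := barMap_ne_zero hlabg hg
  have hcL : cofL f g ≠ 0 := cofL_ne_zero hf hg
  have hcR : cofR f g ≠ 0 := cofR_ne_zero hf hg
  -- Part 1 : polynomial part
  obtain ⟨hP1max, hP1val⟩ := lead_trm_mul hord hf m₁ hcL n₁
  obtain ⟨hP2max, hP2val⟩ := lead_trm_mul hord hg m₂ hcR n₂
  set μ : MMon k n := m₁ * LMd f * ⟨0, n₁⟩ with hμdef
  have hμ' : (m₂ * LMd g * (⟨0, n₂⟩ : MMon k n)) = μ := (amb_lm_eq ha).symm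
  rw [hμ'] at hP2max hP2val
  set P₁ : MixedAlg R k n := trm m₁ (cofL f g) * f * wrd n₁ with hP1def
  set P₂ : MixedAlg R k n := trm m₂ (cofR f g) * g * wrd n₂ with hP2def
  have hSPdef : SPolP f g m₁ n₁ m₂ n₂ = P₁ - P₂ := rfl
  have hambLM : ambLM f m₁ n₁ = μ := rfl
  have hv1 : P₁.coeff μ = lcm (LC f) (LC g) := by rw [hP1val, mul_comm, ← cofL_spec]
  have hv2 : P₂.coeff μ = lcm (LC f) (LC g) := by rw [hP2val, mul_comm, ← cofR_spec]
  have hvalμ : (P₁.coeff - P₂.coeff) μ = 0 := by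
    rw [Finsupp.sub_apply, hv1, hv2, sub_self]
  have part1 : LMb (SPolP f g m₁ n₁ m₂ n₂) < (ambLM f m₁ n₁ : WithBot (MMon k n)) := by
    rw [hSPdef, hambLM, LMb, MonoidAlgebra.coeff_sub, finset_max_lt_iff]
    intro x hx
    have hxne : x ≠ μ := by
      rintro rfl
      exact Finsupp.mem_support_iff.1 hx hvalμ
    have hx' := Finsupp.support_sub hx
    have hxle : (x : WithBot (MMon k n)) ≤ ↑μ := by
      rcases Finset.mem_union.1 hx' with h | h
      · exact le_trans (Finset.le_max h) (le_of_eq hP1max)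
      · exact le_trans (Finset.le_max h) (le_of_eq hP2max)
    exact lt_of_le_of_ne (WithBot.coe_le_coe.1 hxle) hxne
  -- Parts 2–4 : module part
  obtain ⟨hAmax, hAval⟩ := sig_scaleLR hord hα m₁ hcL n₁
  obtain ⟨hBmax, hBval⟩ := sig_scaleLR hord hβ m₂ hcR n₂
  obtain ⟨hA1max, -⟩ := sig_scaleLR hord hα m₁ (one_ne_zero (α := R)) n₁
  obtain ⟨hB1max, -⟩ := sig_scaleLR hord hβ m₂ (one_ne_zero (α := R)) n₂
  set A : SigModule R k n r := scaleLR m₁ (cofL f g) α n₁ with hAdef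
  set B : SigModule R k n r := scaleLR m₂ (cofR f g) β n₂ with hBdef
  set σA : ModMon k n r := mulLR m₁ (sigMd α) n₁ with hsAdef
  set σB : ModMon k n r := mulLR m₂ (sigMd β) n₂ with hsBdef
  have hSMdef : SPolM f g α β m₁ n₁ m₂ n₂ = A - B := rfl
  have hASdef : ambSIG f g α β m₁ n₁ m₂ n₂
      = if sigb B ≤ sigb A then sigT A else -sigT B := rfl
  have hAne : A σA ≠ 0 := by
    rw [hAval]; exact mul_ne_zero hcL (sigC_ne_zero hα)
  have hBne : B σB ≠ 0 := by
    rw [hBval]; exact mul_ne_zero hcR (sigC_ne_zero hβ)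
  have hsTA : sigT A = Finsupp.single σA (A σA) := sigT_eq_of_sigb hAmax
  have hsTB : sigT B = Finsupp.single σB (B σB) := sigT_eq_of_sigb hBmax
  have hreg : RegAmb α β m₁ n₁ m₂ n₂ ↔ σA ≠ σB := by
    rw [RegAmb, hA1max, hB1max, ne_eq, WithBot.coe_inj, ← ne_eq]
  have hsing : SingAmb f g α β m₁ n₁ m₂ n₂ ↔ (σA = σB ∧ A σA = B σB) := by
    rw [SingAmb, ← hAdef, ← hBdef, hsTA, hsTB, Finsupp.single_eq_single_iff]
    constructor
    · rintro (⟨h1, h2⟩ | ⟨h1, h2⟩)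
      · exact ⟨h1, h2⟩
      · exact absurd h1 hAne
    · exact fun h => Or.inl h
  -- upper bound for the support of A - B
  have hub : ∀ τ₀ : ModMon k n r, σA ≤ τ₀ → σB ≤ τ₀ →
      ∀ x ∈ (A - B).support, x ≤ τ₀ := by
    intro τ₀ h1 h2 x hx
    rcases Finset.mem_union.1 (Finsupp.support_sub hx) with h | h
    · exact le_trans (WithBot.coe_le_coe.1 (le_trans (Finset.le_max h) (le_of_eq hAmax))) h1
    · exact le_trans (WithBot.coe_le_coe.1 (le_trans (Finset.le_max h) (le_of_eq hBmax))) h2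
  refine ⟨part1, ?_⟩
  rcases lt_trichotomy σA σB with hlt | heq | hgt
  · -- σA < σB : regular, second term dominates
    have hcond : ¬ sigb B ≤ sigb A := by
      rw [hAmax, hBmax]
      exact not_le.2 (WithBot.coe_lt_coe.2 hlt)
    have hAS : ambSIG f g α β m₁ n₁ m₂ n₂ = Finsupp.single σB (-(B σB)) := by
      rw [hASdef, if_neg hcond, hsTB, ← Finsupp.single_neg]
    have hABval : (A - B) σB = -(B σB) := by
      have hA0 : A σB = 0 :=
        Finsupp.notMem_support_iff.1
          (Finset.notMem_of_max_lt_coe (hAmax.trans_lt (WithBot.coe_lt_coe.2 hlt)))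
      rw [Finsupp.sub_apply, hA0, zero_sub]
    have hmem : σB ∈ (A - B).support :=
      Finsupp.mem_support_iff.2 (by rw [hABval]; exact neg_ne_zero.2 hBne)
    have hmax : sigb (A - B) = (σB : WithBot (ModMon k n r)) :=
      finset_max_eq_coe hmem (hub σB (le_of_lt hlt) le_rfl)
    have hsT : sigT (A - B) = Finsupp.single σB (-(B σB)) := by
      rw [sigT_eq_of_sigb hmax, hABval]
    refine ⟨?_, ?_, ?_⟩
    · rw [hSMdef, hmax, hAS, sigb_single (neg_ne_zero.2 hBne)]
    · constructor
      · intro _; exact hreg.2 (ne_of_lt hlt)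
      · intro _; rw [hSMdef, hsT, hAS]
    · constructor
      · intro h
        exfalso
        rw [hSMdef, hmax, hAS, sigb_single (neg_ne_zero.2 hBne)] at h
        exact lt_irrefl _ h
      · intro h
        exact absurd (hsing.1 h).1 (ne_of_lt hlt)
  · -- σA = σB : tie on monomials
    have hcond : sigb B ≤ sigb A := by rw [hAmax, hBmax, heq]
    have hAS : ambSIG f g α β m₁ n₁ m₂ n₂ = Finsupp.single σA (A σA) := by
      rw [hASdef, if_pos hcond, hsTA]
    have hsbAS : sigb (ambSIG f g α β m₁ n₁ m₂ n₂) = (σA : WithBot (ModMon k n r)) := by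
      rw [hAS, sigb_single hAne]
    have hBσA : B σA = B σB := by rw [heq]
    have hABval : (A - B) σA = A σA - B σB := by
      rw [Finsupp.sub_apply, hBσA]
    by_cases hd : A σA = B σB
    · -- singular case: top terms cancel
      have hvala : (A - B) σA = 0 := by rw [hABval, hd, sub_self]
      have hmaxlt : sigb (A - B) < (σA : WithBot (ModMon k n r)) := by
        rw [sigb, finset_max_lt_iff]
        intro x hx
        have hxne : x ≠ σA := by
          rintro rfl
          exact Finsupp.mem_support_iff.1 hx hvala
        exact lt_of_le_of_ne (hub σA le_rfl (le_of_eq heq.symm) x hx) hxne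
      refine ⟨?_, ?_, ?_⟩
      · rw [hSMdef, hsbAS]; exact le_of_lt hmaxlt
      · constructor
        · intro h
          exfalso
          have h2 : ∀ x, sigT (A - B) x = Finsupp.single σA (A σA) x := by
            rw [← hAS, ← hSMdef, h]; intro x; rfl
          have h3 := h2 σA
          rw [Finsupp.single_eq_same] at h3
          by_cases h0 : A - B = 0
          · rw [h0, sigT_zero] at h3
            exact hAne (by simpa using h3.symm)
          · have h4 : sigMd (A - B) ≠ σA := by
              intro he
              have := sigMd_mem h0
              rw [he] at this
              exact Finsupp.mem_support_iff.1 this hvala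
            rw [sigT, Finsupp.single_eq_of_ne h4.symm] at h3
            exact hAne h3.symm
        · intro h
          exact absurd heq (hreg.1 h)
      · constructor
        · intro _
          exact hsing.2 ⟨heq, hd⟩
        · intro _
          rw [hSMdef, hsbAS]; exact hmaxlt
    · -- tie on monomials but coefficients differ
      have hvala : (A - B) σA ≠ 0 := by rw [hABval]; exact sub_ne_zero.2 hd
      have hmem : σA ∈ (A - B).support := Finsupp.mem_support_iff.2 hvala
      have hmax : sigb (A - B) = (σA : WithBot (ModMon k n r)) :=
        finset_max_eq_coe hmem (hub σA le_rfl (le_of_eq heq.symm))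
      refine ⟨?_, ?_, ?_⟩
      · rw [hSMdef, hmax, hsbAS]
      · constructor
        · intro h
          exfalso
          rw [hSMdef, sigT_eq_of_sigb hmax, hAS] at h
          rcases Finsupp.single_eq_single_iff _ _ _ _ |>.1 h with ⟨-, h2⟩ | ⟨h1, -⟩
          · rw [hABval] at h2
            exact hBne (sub_eq_self.1 h2)
          · exact hvala h1
        · intro h
          exact absurd heq (hreg.1 h)
      · constructor
        · intro h
          exfalso
          rw [hSMdef, hmax, hsbAS] at h
          exact lt_irrefl _ h
        · intro h
          exact absurd (hsing.1 h).2 hd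
  · -- σB < σA : regular, first term dominates
    have hcond : sigb B ≤ sigb A := by
      rw [hAmax, hBmax]
      exact le_of_lt (WithBot.coe_lt_coe.2 hgt)
    have hAS : ambSIG f g α β m₁ n₁ m₂ n₂ = Finsupp.single σA (A σA) := by
      rw [hASdef, if_pos hcond, hsTA]
    have hABval : (A - B) σA = A σA := by
      have hB0 : B σA = 0 :=
        Finsupp.notMem_support_iff.1
          (Finset.notMem_of_max_lt_coe (hBmax.trans_lt (WithBot.coe_lt_coe.2 hgt)))
      rw [Finsupp.sub_apply, hB0, sub_zero]
    have hmem : σA ∈ (A - B).support :=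
      Finsupp.mem_support_iff.2 (by rw [hABval]; exact hAne)
    have hmax : sigb (A - B) = (σA : WithBot (ModMon k n r)) :=
      finset_max_eq_coe hmem (hub σA le_rfl (le_of_lt hgt))
    have hsT : sigT (A - B) = Finsupp.single σA (A σA) := by
      rw [sigT_eq_of_sigb hmax, hABval]
    refine ⟨?_, ?_, ?_⟩
    · rw [hSMdef, hmax, hAS, sigb_single hAne]
    · constructor
      · intro _; exact hreg.2 (ne_of_gt hgt)
      · intro _; rw [hSMdef, hsT, hAS]
    · constructor
      · intro h
        exfalso
        rw [hSMdef, hmax, hAS, sigb_single hAne] at h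
        exact lt_irrefl _ h
      · intro h
        exact absurd (hsing.1 h).1 (ne_of_gt hgt)
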